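/- For any integer k with 1 ≤ k ≤ T−1 and any integer t with k+1 ≤ t ≤ T, every (x, y) ∈ P satisfies x_t − x_{t−k} ≤ (C_ + k·V)·y_t − C_·y_{t−k}. -/

import Mathlib

/-- Membership in the single-generator unit-commitment set `P`:
`x` is the generation vector, `y` the binary on/off vector, over periods `1,…,T`. -/
def inP (T L Ldn : ℤ) (Cl Cu V Vb : ℝ) (x y : ℤ → ℝ) : Prop :=
  (∀ t : ℤ, 1 ≤ t → t ≤ T → 0 ≤ x t) ∧
  (∀ t : ℤ, 1 ≤ t → t ≤ T → y t = 0 ∨ y t = 1) ∧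
  (∀ t k : ℤ, 2 ≤ t → t ≤ T → t ≤ k → k ≤ min T (t + L - 1) →
    -y (t - 1) + y t - y k ≤ 0) ∧
  (∀ t k : ℤ, 2 ≤ t → t ≤ T → t ≤ k → k ≤ min T (t + Ldn - 1) →
    y (t - 1) - y t + y k ≤ 1) ∧
  (∀ t : ℤ, 1 ≤ t → t ≤ T → Cl * y t ≤ x t) ∧
  (∀ t : ℤ, 1 ≤ t → t ≤ T → x t ≤ Cu * y t) ∧
  (∀ t : ℤ, 2 ≤ t → t ≤ T → x t - x (t - 1) ≤ V * y (t - 1) + Vb * (1 - y (t - 1))) ∧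
  (∀ t : ℤ, 2 ≤ t → t ≤ T → x (t - 1) - x t ≤ V * y t + Vb * (1 - y t))

theorem stmt_4 (T L Ldn : ℤ) (Cl Cu V Vb : ℝ)
    (hT : 1 ≤ T) (hL : 1 ≤ L) (hLdn : 1 ≤ Ldn)
    (hCl : 0 < Cl) (hCu : Cl < Cu) (hV : 0 < V)
    (hVVb : Vb + V ≤ Cu) (hVb1 : Cl < Vb) (hVb2 : Vb < Cl + V)
    (k : ℤ) (hk1 : 1 ≤ k) (hk2 : k ≤ T - 1)
    (t : ℤ) (ht1 : k + 1 ≤ t) (ht2 : t ≤ T)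
    (x y : ℤ → ℝ) (hxy : inP T L Ldn Cl Cu V Vb x y) :
    x t - x (t - k) ≤ (Cl + (k : ℝ) * V) * y t - Cl * y (t - k) := by
  obtain ⟨hx0, hy01, -, -, hlo, hhi, hup, -⟩ := hxy
  clear hk2
  refine Int.le_induction (motive := fun n _ => ∀ t : ℤ, n + 1 ≤ t → t ≤ T →
      x t - x (t - n) ≤ (Cl + (n : ℝ) * V) * y t - Cl * y (t - n)) ?_ ?_ k hk1 t ht1 ht2
  · clear ht1 ht2 t
    intro t ht1 ht2
    have h1t : 1 ≤ t - 1 := by linarith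
    have hxt1lo : Cl * y (t - 1) ≤ x (t - 1) := hlo (t - 1) h1t (by linarith)
    rcases hy01 t (by linarith) ht2 with h0 | h1
    · have hxt : x t ≤ 0 := by
        have := hhi t (by linarith) ht2; rw [h0] at this; simpa using this
      rw [h0]; push_cast; linarith
    · have hru := hup t (by linarith) ht2
      rcases hy01 (t - 1) h1t (by linarith) with h0' | h1'
      · have hx1 : x (t - 1) = 0 := by
          refine le_antisymm ?_ (hx0 (t - 1) h1t (by linarith))
          have := hhi (t - 1) h1t (by linarith); rw [h0'] at this; simpa using this
        rw [h0'] at hru; rw [h0', h1, hx1]; push_cast; linarith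
      · rw [h1'] at hru; rw [h1', h1]; push_cast; linarith
  · clear ht1 ht2 t hk1 k
    intro k hk ih t ht1 ht2
    have htk : t - (k + 1) = t - k - 1 := by ring
    have h1tk : 1 ≤ t - k - 1 := by linarith
    have h2tk : 2 ≤ t - k := by linarith
    have htkT : t - k ≤ T := by linarith
    have hxklo : Cl * y (t - k - 1) ≤ x (t - k - 1) := hlo _ h1tk (by linarith)
    rcases hy01 t (by linarith) ht2 with h0 | h1
    · have hxt : x t ≤ 0 := by
        have := hhi t (by linarith) ht2; rw [h0] at this; simpa using this
      rw [h0, htk]; push_cast; linarith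
    · have hih := ih t (by linarith) ht2
      rw [h1] at hih ⊢
      have hru := hup (t - k) h2tk htkT
      rcases hy01 (t - k) (by linarith) htkT with h0' | h1'
      · have hxk : x (t - k) = 0 := by
          refine le_antisymm ?_ (hx0 (t - k) (by linarith) htkT)
          have := hhi (t - k) (by linarith) htkT; rw [h0'] at this; simpa using this
        rw [h0', hxk] at hih
        rw [htk]; push_cast
        nlinarith [hk, (by exact_mod_cast hk : (1:ℝ) ≤ (k:ℝ))]
      · rw [h1'] at hih
        rcases hy01 (t - k - 1) h1tk (by linarith) with h0'' | h1''
        · rw [h0''] at hru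
          rw [htk, h0'']; push_cast; linarith
        · rw [h1''] at hru
          rw [htk, h1'']; push_cast; linarith
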